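/- Orthonormality of added states: define φ_j^{(M)}(x) = Σ_{k=1}^M (F^{-1}(x))_{jk} φ_k(x). If additionally ⟨φ_j,φ_k⟩(x) → ∞-type limits hold so that (F^{-1}(x)) → 0 as x → x2 (e.g. each ∫_{x1}^{x2} φ_j² = ∞ and F(x)^{-1} → 0 entrywise), then ∫_{x1}^{x2} φ_j^{(M)} φ_k^{(M)} = δ_{jk} for all 1 ≤ j,k ≤ M. -/

import Mathlib

open Set MeasureTheory intervalIntegral Matrix Filter

/-- The Abraham–Moses matrix `F(x)` with entries `δ_{jk} + ∫_{x1}^x φ_j φ_k`. -/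
noncomputable def amF (x1 : ℝ) {M : ℕ} (φ : Fin M → ℝ → ℝ) (x : ℝ) :
    Matrix (Fin M) (Fin M) ℝ :=
  Matrix.of fun j k => (if j = k then (1 : ℝ) else 0) + ∫ t in x1..x, φ j t * φ k t

/-- The added states `φ_j^{(M)}`. -/
private noncomputable def amPsi (x1 : ℝ) {M : ℕ} (φ : Fin M → ℝ → ℝ) (j : Fin M) (y : ℝ) : ℝ :=
  ∑ l, (amF x1 φ y)⁻¹ j l * φ l y

/-! ### Differentiability of determinant, adjugate, inverse entries -/

private lemma aux_det_diff {N : ℕ} {A : ℝ → Matrix (Fin N) (Fin N) ℝ} {x : ℝ}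
    (h : ∀ j k, DifferentiableAt ℝ (fun t => A t j k) x) :
    DifferentiableAt ℝ (fun t => (A t).det) x := by
  simp only [Matrix.det_apply']
  exact DifferentiableAt.fun_sum fun σ _ =>
    (DifferentiableAt.fun_finsetProd fun i _ => h (σ i) i).const_mul _

private lemma aux_adj_diff {N : ℕ} {A : ℝ → Matrix (Fin N) (Fin N) ℝ} {x : ℝ}
    (h : ∀ j k, DifferentiableAt ℝ (fun t => A t j k) x) (i j : Fin N) :
    DifferentiableAt ℝ (fun t => (A t).adjugate i j) x := by
  simp only [Matrix.adjugate_apply]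
  apply aux_det_diff
  intro a b
  simp only [Matrix.updateRow_apply]
  by_cases haj : a = j
  · simp [haj]
  · simp only [haj, if_false]
    exact h a b

private lemma aux_inv_diff {N : ℕ} {A : ℝ → Matrix (Fin N) (Fin N) ℝ} {x : ℝ}
    (h : ∀ j k, DifferentiableAt ℝ (fun t => A t j k) x)
    (hdet : (A x).det ≠ 0) (j k : Fin N) :
    DifferentiableAt ℝ (fun t => (A t)⁻¹ j k) x := by
  have hrw : ∀ t, (A t)⁻¹ j k = ((A t).det)⁻¹ * (A t).adjugate j k := by
    intro t
    rw [Matrix.inv_def, Matrix.smul_apply, Ring.inverse_eq_inv, smul_eq_mul]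
  simp only [hrw]
  exact ((aux_det_diff h).inv hdet).mul (aux_adj_diff h j k)

/-- Derivative of the entries of the inverse of a matrix-valued function. -/
private lemma aux_inv_hasDerivAt {N : ℕ} {A : ℝ → Matrix (Fin N) (Fin N) ℝ}
    {A' : Matrix (Fin N) (Fin N) ℝ} {x : ℝ}
    (hA : ∀ j k, HasDerivAt (fun t => A t j k) (A' j k) x)
    (hdet : (A x).det ≠ 0) (j k : Fin N) :
    HasDerivAt (fun t => (A t)⁻¹ j k) (-(((A x)⁻¹ * A' * (A x)⁻¹) j k)) x := by
  have hu : IsUnit (A x).det := isUnit_iff_ne_zero.mpr hdet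
  have hdiffF : ∀ a b, DifferentiableAt ℝ (fun t => A t a b) x :=
    fun a b => (hA a b).differentiableAt
  have hdiff : ∀ a b, DifferentiableAt ℝ (fun t => (A t)⁻¹ a b) x :=
    fun a b => aux_inv_diff hdiffF hdet a b
  set D : Matrix (Fin N) (Fin N) ℝ :=
    Matrix.of fun a b => deriv (fun t => (A t)⁻¹ a b) x with hD
  have hDd : ∀ a b, HasDerivAt (fun t => (A t)⁻¹ a b) (D a b) x :=
    fun a b => (hdiff a b).hasDerivAt
  -- eventually invertible
  have hdetc : ContinuousAt (fun t => (A t).det) x := (aux_det_diff hdiffF).continuousAt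
  have hev : ∀ᶠ t in nhds x, (A t).det ≠ 0 := hdetc.eventually_ne hdet
  -- the product is eventually the identity
  have hsum0 : ∀ a b : Fin N,
      (∑ l, (A' a l * (A x)⁻¹ l b + A x a l * D l b)) = 0 := by
    intro a b
    have h1 : HasDerivAt (fun t => ∑ l, A t a l * (A t)⁻¹ l b)
        (∑ l, (A' a l * (A x)⁻¹ l b + A x a l * D l b)) x :=
      HasDerivAt.fun_sum fun l _ => (hA a l).mul (hDd l b)
    have h2 : (fun t => ∑ l, A t a l * (A t)⁻¹ l b) =ᶠ[nhds x]
        fun _ => (1 : Matrix (Fin N) (Fin N) ℝ) a b := by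
      filter_upwards [hev] with t ht
      rw [← Matrix.mul_apply, Matrix.mul_nonsing_inv _ (isUnit_iff_ne_zero.mpr ht)]
    have h3 : HasDerivAt (fun t => ∑ l, A t a l * (A t)⁻¹ l b) 0 x :=
      (hasDerivAt_const x _).congr_of_eventuallyEq h2
    exact h1.unique h3
  have hmat : A' * (A x)⁻¹ + A x * D = 0 := by
    ext a b
    simpa [Matrix.add_apply, Matrix.mul_apply, Finset.sum_add_distrib] using hsum0 a b
  have h1 : A x * D = -(A' * (A x)⁻¹) := by
    rw [eq_neg_iff_add_eq_zero, add_comm]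
    exact hmat
  have hDeq : D = -((A x)⁻¹ * A' * (A x)⁻¹) := by
    calc D = ((A x)⁻¹ * A x) * D := by rw [Matrix.nonsing_inv_mul _ hu, Matrix.one_mul]
    _ = (A x)⁻¹ * (A x * D) := by rw [Matrix.mul_assoc]
    _ = (A x)⁻¹ * -(A' * (A x)⁻¹) := by rw [h1]
    _ = -((A x)⁻¹ * A' * (A x)⁻¹) := by rw [Matrix.mul_neg, Matrix.mul_assoc]
  have := hDd j k
  rwa [show D j k = -(((A x)⁻¹ * A' * (A x)⁻¹) j k) by rw [hDeq, Matrix.neg_apply]] at this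

/-! ### Basic properties of `amF` -/

private lemma amF_isHermitian (x1 : ℝ) {M : ℕ} (φ : Fin M → ℝ → ℝ) (x : ℝ) :
    (amF x1 φ x).IsHermitian := by
  unfold Matrix.IsHermitian
  ext j k
  simp only [Matrix.conjTranspose_apply, star_trivial, amF, Matrix.of_apply]
  congr 1
  · exact if_congr eq_comm rfl rfl
  · exact intervalIntegral.integral_congr fun t _ => mul_comm (φ k t) (φ j t)

private lemma amII (x1 x2 : ℝ) {M : ℕ} (φ : Fin M → ℝ → ℝ)
    (hintφ : ∀ j k, ∀ x ∈ Ioo x1 x2,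
      IntegrableOn (fun y => φ j y * φ k y) (Ioo x1 x))
    {x : ℝ} (hx : x ∈ Ioo x1 x2) (j k : Fin M) :
    IntervalIntegrable (fun t => φ j t * φ k t) volume x1 x := by
  have hxx' : x < (x + x2) / 2 := by linarith [hx.2]
  have hmem : (x + x2) / 2 ∈ Ioo x1 x2 := ⟨by linarith [hx.1], by linarith [hx.2]⟩
  rw [intervalIntegrable_iff_integrableOn_Ioc_of_le hx.1.le]
  exact (hintφ j k _ hmem).mono_set fun t ht => ⟨ht.1, lt_of_le_of_lt ht.2 hxx'⟩

private lemma amF_posDef (x1 x2 : ℝ) {M : ℕ} (φ : Fin M → ℝ → ℝ)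
    (hintφ : ∀ j k, ∀ x ∈ Ioo x1 x2,
      IntegrableOn (fun y => φ j y * φ k y) (Ioo x1 x))
    {x : ℝ} (hx : x ∈ Ioo x1 x2) : (amF x1 φ x).PosDef := by
  have hII : ∀ j k : Fin M, IntervalIntegrable (fun t => φ j t * φ k t) volume x1 x :=
    fun j k => amII x1 x2 φ hintφ hx j k
  refine posDef_iff_dotProduct_mulVec.mpr ⟨amF_isHermitian x1 φ x, fun v hv => ?_⟩
  have hsq : ∀ p : Fin M × Fin M,
      IntervalIntegrable (fun t => (v p.1 * φ p.1 t) * (v p.2 * φ p.2 t)) volume x1 x := by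
    intro p
    have h := (hII p.1 p.2).const_mul (v p.1 * v p.2)
    have : (fun t => v p.1 * v p.2 * (φ p.1 t * φ p.2 t))
        = fun t => (v p.1 * φ p.1 t) * (v p.2 * φ p.2 t) := by
      funext t; ring
    rwa [this] at h
  have hexp : ∫ t in x1..x, (∑ j, v j * φ j t) ^ 2
      = ∑ j, ∑ k, v j * v k * ∫ t in x1..x, φ j t * φ k t := by
    have h1 : ∀ t : ℝ, (∑ j, v j * φ j t) ^ 2
        = ∑ p : Fin M × Fin M, (v p.1 * φ p.1 t) * (v p.2 * φ p.2 t) := by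
      intro t
      rw [sq, Finset.sum_mul_sum, ← Fintype.sum_prod_type']
    rw [intervalIntegral.integral_congr (fun t _ => h1 t),
      intervalIntegral.integral_finset_sum (fun p _ => hsq p), ← Fintype.sum_prod_type']
    apply Finset.sum_congr rfl
    intro p _
    rw [show (fun t => (v p.1 * φ p.1 t) * (v p.2 * φ p.2 t))
        = fun t => v p.1 * v p.2 * (φ p.1 t * φ p.2 t) from funext fun t => by ring,
      intervalIntegral.integral_const_mul]
  have hdot : star v ⬝ᵥ (amF x1 φ x) *ᵥ v
      = (∑ j, v j * v j) + ∫ t in x1..x, (∑ j, v j * φ j t) ^ 2 := by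
    rw [hexp, ← Finset.sum_add_distrib]
    simp only [dotProduct, Matrix.mulVec, dotProduct, amF, Matrix.of_apply, star_trivial,
      Pi.star_apply, add_mul, ite_mul, one_mul, zero_mul, mul_add, Finset.mul_sum]
    apply Finset.sum_congr rfl
    intro j _
    rw [Finset.sum_add_distrib]
    congr 1
    · simp [mul_ite, mul_zero, Finset.sum_ite_eq]
    · exact Finset.sum_congr rfl fun k _ => by ring
  rw [hdot]
  have h2 : 0 ≤ ∫ t in x1..x, (∑ j, v j * φ j t) ^ 2 :=
    intervalIntegral.integral_nonneg hx.1.le fun t _ => sq_nonneg _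
  have h3 : 0 < ∑ j, v j * v j := by
    obtain ⟨i, hi⟩ := Function.ne_iff.mp hv
    exact Finset.sum_pos' (fun j _ => mul_self_nonneg _)
      ⟨i, Finset.mem_univ i, mul_self_pos.mpr hi⟩
  linarith

private lemma amF_entry_hasDerivAt (x1 x2 : ℝ) {M : ℕ} (φ : Fin M → ℝ → ℝ)
    (hφc : ∀ j, ContinuousOn (φ j) (Ioo x1 x2))
    (hintφ : ∀ j k, ∀ x ∈ Ioo x1 x2,
      IntegrableOn (fun y => φ j y * φ k y) (Ioo x1 x))
    {x : ℝ} (hx : x ∈ Ioo x1 x2) (j k : Fin M) :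
    HasDerivAt (fun t => amF x1 φ t j k) (φ j x * φ k x) x := by
  have hcont : ContinuousOn (fun t => φ j t * φ k t) (Ioo x1 x2) := (hφc j).mul (hφc k)
  have h1 : HasDerivAt (fun u => ∫ t in x1..u, φ j t * φ k t) (φ j x * φ k x) x :=
    intervalIntegral.integral_hasDerivAt_right (amII x1 x2 φ hintφ hx j k)
      (hcont.stronglyMeasurableAtFilter isOpen_Ioo x hx)
      (hcont.continuousAt (isOpen_Ioo.mem_nhds hx))
  simpa [amF, Matrix.of_apply] using h1.const_add (if j = k then (1 : ℝ) else 0)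

private lemma amInv_hasDerivAt (x1 x2 : ℝ) {M : ℕ} (φ : Fin M → ℝ → ℝ)
    (hφc : ∀ j, ContinuousOn (φ j) (Ioo x1 x2))
    (hintφ : ∀ j k, ∀ x ∈ Ioo x1 x2,
      IntegrableOn (fun y => φ j y * φ k y) (Ioo x1 x))
    {x : ℝ} (hx : x ∈ Ioo x1 x2) (j k : Fin M) :
    HasDerivAt (fun t => (amF x1 φ t)⁻¹ j k)
      (-(amPsi x1 φ j x * amPsi x1 φ k x)) x := by
  have hpd := amF_posDef x1 x2 φ hintφ hx
  have hdet : (amF x1 φ x).det ≠ 0 := hpd.det_pos.ne'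
  have hA : ∀ a b : Fin M, HasDerivAt (fun t => amF x1 φ t a b)
      ((Matrix.of fun a b : Fin M => φ a x * φ b x) a b) x := by
    intro a b
    simpa [Matrix.of_apply] using amF_entry_hasDerivAt x1 x2 φ hφc hintφ hx a b
  have h := aux_inv_hasDerivAt hA hdet j k
  have hGsym : ∀ a b : Fin M, (amF x1 φ x)⁻¹ a b = (amF x1 φ x)⁻¹ b a := by
    intro a b
    have h1 := (amF_isHermitian x1 φ x).inv.apply b a
    simpa using h1
  have key : ((amF x1 φ x)⁻¹ * (Matrix.of fun a b : Fin M => φ a x * φ b x) *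
      (amF x1 φ x)⁻¹) j k = amPsi x1 φ j x * amPsi x1 φ k x := by
    simp only [amPsi, Matrix.mul_apply, Matrix.of_apply]
    rw [Finset.sum_mul_sum, Finset.sum_comm]
    apply Finset.sum_congr rfl
    intro m _
    rw [Finset.sum_mul]
    apply Finset.sum_congr rfl
    intro l _
    rw [hGsym k m]
    ring
  rwa [key] at h

private lemma amPsi_continuousOn (x1 x2 : ℝ) {M : ℕ} (φ : Fin M → ℝ → ℝ)
    (hφc : ∀ j, ContinuousOn (φ j) (Ioo x1 x2))
    (hintφ : ∀ j k, ∀ x ∈ Ioo x1 x2,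
      IntegrableOn (fun y => φ j y * φ k y) (Ioo x1 x))
    (j : Fin M) : ContinuousOn (amPsi x1 φ j) (Ioo x1 x2) := by
  unfold amPsi
  apply continuousOn_finset_sum
  intro l _
  apply ContinuousOn.mul _ (hφc l)
  apply continuousOn_of_forall_continuousAt
  intro x hx
  have hpd := amF_posDef x1 x2 φ hintφ hx
  exact (aux_inv_diff
    (fun a b => (amF_entry_hasDerivAt x1 x2 φ hφc hintφ hx a b).differentiableAt)
    hpd.det_pos.ne' j l).continuousAt

private lemma am_integral_sub (x1 x2 : ℝ) {M : ℕ} (φ : Fin M → ℝ → ℝ)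
    (hφc : ∀ j, ContinuousOn (φ j) (Ioo x1 x2))
    (hintφ : ∀ j k, ∀ x ∈ Ioo x1 x2,
      IntegrableOn (fun y => φ j y * φ k y) (Ioo x1 x))
    {a b : ℝ} (ha : x1 < a) (hab : a ≤ b) (hb : b < x2) (j k : Fin M) :
    ∫ y in a..b, amPsi x1 φ j y * amPsi x1 φ k y
      = (amF x1 φ a)⁻¹ j k - (amF x1 φ b)⁻¹ j k := by
  have hsub : uIcc a b ⊆ Ioo x1 x2 := by
    rw [uIcc_of_le hab]
    exact fun y hy => ⟨lt_of_lt_of_le ha hy.1, lt_of_le_of_lt hy.2 hb⟩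
  have hderiv : ∀ y ∈ uIcc a b, HasDerivAt (fun t => -((amF x1 φ t)⁻¹ j k))
      (amPsi x1 φ j y * amPsi x1 φ k y) y := by
    intro y hy
    have := (amInv_hasDerivAt x1 x2 φ hφc hintφ (hsub hy) j k).fun_neg
    simpa using this
  have hci : IntervalIntegrable (fun y => amPsi x1 φ j y * amPsi x1 φ k y) volume a b :=
    (((amPsi_continuousOn x1 x2 φ hφc hintφ j).mono hsub).mul
      ((amPsi_continuousOn x1 x2 φ hφc hintφ k).mono hsub)).intervalIntegrable
  have h := intervalIntegral.integral_eq_sub_of_hasDerivAt hderiv hci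
  rw [h]
  ring

theorem am_added_states_orthonormal (x1 x2 : ℝ) (hlt : x1 < x2)
    (M : ℕ) (φ : Fin M → ℝ → ℝ)
    (hφc : ∀ j, ContinuousOn (φ j) (Ioo x1 x2))
    (hintφ : ∀ j k, ∀ x ∈ Ioo x1 x2,
      IntegrableOn (fun y => φ j y * φ k y) (Ioo x1 x))
    (hInvLim2 : ∀ j k : Fin M,
      Tendsto (fun x => (amF x1 φ x)⁻¹ j k) (nhdsWithin x2 (Iio x2)) (nhds 0))
    (hInvLim1 : ∀ j k : Fin M,
      Tendsto (fun x => (amF x1 φ x)⁻¹ j k) (nhdsWithin x1 (Ioi x1))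
        (nhds (if j = k then 1 else 0))) :
    ∀ j k : Fin M,
      ∫ y in Ioo x1 x2,
        (∑ l : Fin M, (amF x1 φ y)⁻¹ j l * φ l y) *
        (∑ l : Fin M, (amF x1 φ y)⁻¹ k l * φ l y) =
      if j = k then 1 else 0 := by
  intro j k
  show ∫ y in Ioo x1 x2, amPsi x1 φ j y * amPsi x1 φ k y = if j = k then 1 else 0
  have hcpos : (0 : ℝ) < x2 - x1 := sub_pos.mpr hlt
  set aN : ℕ → ℝ := fun n => x1 + (x2 - x1) / (n + 2) with haN
  set bN : ℕ → ℝ := fun n => x2 - (x2 - x1) / (n + 2) with hbN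
  have hdpos : ∀ n : ℕ, 0 < (x2 - x1) / ((n : ℝ) + 2) := fun n => div_pos hcpos (by positivity)
  have hdle : ∀ n : ℕ, (x2 - x1) / ((n : ℝ) + 2) ≤ (x2 - x1) / 2 := by
    intro n
    gcongr
    linarith [Nat.cast_nonneg (α := ℝ) n]
  have haMem : ∀ n, aN n ∈ Ioo x1 x2 := by
    intro n
    have h1 := hdpos n
    have h2 := hdle n
    constructor <;> simp only [haN] <;> linarith
  have hbMem : ∀ n, bN n ∈ Ioo x1 x2 := by
    intro n
    have h1 := hdpos n
    have h2 := hdle n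
    constructor <;> simp only [hbN] <;> linarith
  have hab : ∀ n, aN n ≤ bN n := by
    intro n
    have h1 := hdle n
    simp only [haN, hbN]
    linarith
  have hdlim : Tendsto (fun n : ℕ => (x2 - x1) / ((n : ℝ) + 2)) atTop (nhds 0) :=
    Tendsto.div_atTop tendsto_const_nhds
      (tendsto_atTop_add_const_right atTop 2 tendsto_natCast_atTop_atTop)
  have haTo : Tendsto aN atTop (nhds x1) := by
    rw [haN]
    simpa using tendsto_const_nhds.add hdlim
  have hbTo : Tendsto bN atTop (nhds x2) := by
    rw [hbN]
    simpa using tendsto_const_nhds.sub hdlim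
  have haTo' : Tendsto aN atTop (nhdsWithin x1 (Ioi x1)) :=
    tendsto_nhdsWithin_of_tendsto_nhds_of_eventually_within _ haTo
      (Eventually.of_forall fun n => (haMem n).1)
  have hbTo' : Tendsto bN atTop (nhdsWithin x2 (Iio x2)) :=
    tendsto_nhdsWithin_of_tendsto_nhds_of_eventually_within _ hbTo
      (Eventually.of_forall fun n => (hbMem n).2)
  have hIval : ∀ n, ∫ y in aN n..bN n, amPsi x1 φ j y * amPsi x1 φ k y
      = (amF x1 φ (aN n))⁻¹ j k - (amF x1 φ (bN n))⁻¹ j k :=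
    fun n => am_integral_sub x1 x2 φ hφc hintφ (haMem n).1 (hab n) (hbMem n).2 j k
  have hlim : Tendsto (fun n => (amF x1 φ (aN n))⁻¹ j k - (amF x1 φ (bN n))⁻¹ j k) atTop
      (nhds ((if j = k then 1 else 0) - 0)) :=
    ((hInvLim1 j k).comp haTo').sub ((hInvLim2 j k).comp hbTo')
  have hIsq : ∀ (l : Fin M) (n : ℕ),
      ∫ y in Ioc (aN n) (bN n), amPsi x1 φ l y * amPsi x1 φ l y
        = (amF x1 φ (aN n))⁻¹ l l - (amF x1 φ (bN n))⁻¹ l l := by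
    intro l n
    rw [← intervalIntegral.integral_of_le (hab n)]
    exact am_integral_sub x1 x2 φ hφc hintφ (haMem n).1 (hab n) (hbMem n).2 l l
  have hIoc_sub : ∀ n, Ioc (aN n) (bN n) ⊆ Ioo x1 x2 := fun n y hy =>
    ⟨lt_trans (haMem n).1 hy.1, lt_of_le_of_lt hy.2 (hbMem n).2⟩
  have hIcc_sub : ∀ n, Icc (aN n) (bN n) ⊆ Ioo x1 x2 := fun n y hy =>
    ⟨lt_of_lt_of_le (haMem n).1 hy.1, lt_of_le_of_lt hy.2 (hbMem n).2⟩
  have hintn : ∀ (a b : Fin M) (n : ℕ),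
      IntegrableOn (fun y => amPsi x1 φ a y * amPsi x1 φ b y) (Ioc (aN n) (bN n)) := by
    intro a b n
    have hc : ContinuousOn (fun y => amPsi x1 φ a y * amPsi x1 φ b y) (Icc (aN n) (bN n)) :=
      ((amPsi_continuousOn x1 x2 φ hφc hintφ a).mul
        (amPsi_continuousOn x1 x2 φ hφc hintφ b)).mono (hIcc_sub n)
    exact hc.integrableOn_Icc.mono_set Ioc_subset_Icc_self
  have hbound : ∀ n : ℕ,
      (∫ y in Ioc (aN n) (bN n), ‖amPsi x1 φ j y * amPsi x1 φ k y‖)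
        ≤ ((amF x1 φ (aN n))⁻¹ j j - (amF x1 φ (bN n))⁻¹ j j
            + ((amF x1 φ (aN n))⁻¹ k k - (amF x1 φ (bN n))⁻¹ k k)) / 2 := by
    intro n
    have step1 : (∫ y in Ioc (aN n) (bN n), ‖amPsi x1 φ j y * amPsi x1 φ k y‖)
        ≤ ∫ y in Ioc (aN n) (bN n),
            (amPsi x1 φ j y * amPsi x1 φ j y + amPsi x1 φ k y * amPsi x1 φ k y) / 2 := by
      apply setIntegral_mono_on ((hintn j k n).norm)
        (((hintn j j n).add (hintn k k n)).div_const 2) measurableSet_Ioc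
      intro y _
      simp only [Pi.add_apply]
      rw [Real.norm_eq_abs]
      apply abs_le.mpr
      constructor <;>
        nlinarith [sq_nonneg (amPsi x1 φ j y + amPsi x1 φ k y),
          sq_nonneg (amPsi x1 φ j y - amPsi x1 φ k y)]
    rwa [MeasureTheory.integral_div, integral_add (hintn j j n) (hintn k k n), hIsq j n, hIsq k n] at step1
  have hBlim : Tendsto (fun n => ((amF x1 φ (aN n))⁻¹ j j - (amF x1 φ (bN n))⁻¹ j j
      + ((amF x1 φ (aN n))⁻¹ k k - (amF x1 φ (bN n))⁻¹ k k)) / 2) atTop (nhds 1) := by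
    have h1 := ((hInvLim1 j j).comp haTo').sub ((hInvLim2 j j).comp hbTo')
    have h2 := ((hInvLim1 k k).comp haTo').sub ((hInvLim2 k k).comp hbTo')
    have h3 := (h1.add h2).div_const (2 : ℝ)
    simpa [Function.comp] using h3
  have hevbound : ∀ᶠ n in atTop,
      (∫ y in Ioc (aN n) (bN n), ‖amPsi x1 φ j y * amPsi x1 φ k y‖) ≤ 2 := by
    filter_upwards [hBlim.eventually (eventually_le_nhds (by norm_num : (1 : ℝ) < 2))] with n hn
    exact le_trans (hbound n) hn
  have hInt : IntegrableOn (fun y => amPsi x1 φ j y * amPsi x1 φ k y) (Ioo x1 x2) :=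
    (integrableOn_Ioc_of_intervalIntegral_norm_bounded (hintn j k) haTo hbTo
      hevbound).mono_set Ioo_subset_Ioc_self
  have hcov : AECover (volume.restrict (Ioo x1 x2)) atTop (fun n => Ioc (aN n) (bN n)) :=
    aecover_Ioo_of_Ioc haTo hbTo
  have hfin := hcov.integral_tendsto_of_countably_generated hInt
  have hfin' : Tendsto (fun n => ∫ y in aN n..bN n, amPsi x1 φ j y * amPsi x1 φ k y) atTop
      (nhds (∫ y in Ioo x1 x2, amPsi x1 φ j y * amPsi x1 φ k y)) := by
    refine hfin.congr fun n => ?_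
    rw [Measure.restrict_restrict measurableSet_Ioc,
      inter_eq_self_of_subset_left (hIoc_sub n)]
    exact (intervalIntegral.integral_of_le (hab n)).symm
  have hseq : Tendsto (fun n => ∫ y in aN n..bN n, amPsi x1 φ j y * amPsi x1 φ k y) atTop
      (nhds ((if j = k then 1 else 0) - 0)) :=
    hlim.congr fun n => (hIval n).symm
  have hfinal := tendsto_nhds_unique hfin' hseq
  simpa using hfinal
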